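/- arXiv:2007.04683 — 3 statements merged into one kernel-verified Lean document; each statement's English description precedes it below -/
import Mathlib

section
/- Let K ⊂ ℝⁿ be a convex body with 0 ∈ int(K), and define K₀ = ⋃_{p ∈ ∂K} (-p + K). Then K₀ is a convex set. -/
open Pointwise

/-- Auxiliary lemma: for a compact convex set `K` and `x y ∈ K` with `x ≠ y`, there is a
frontier point `p` of `K` with `p + (x - y) ∈ K`. -/
theorem pansu_wulff_stmt6_aux {E : Type*} [NormedAddCommGroup E] [NormedSpace ℝ E]
    {K : Set E} (hK_compact : IsCompact K) (hK_convex : Convex ℝ K)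
    {x y : E} (hx : x ∈ K) (hy : y ∈ K) (hne : x - y ≠ 0) :
    ∃ p ∈ frontier K, p + (x - y) ∈ K := by
  have hKclosed := hK_compact.isClosed
  set v := x - y with hv
  have hf : Continuous fun t : ℝ => y - t • v := by continuity
  have hf' : Continuous fun t : ℝ => y - (t - 1) • v := by continuity
  set S : Set ℝ := {t | 0 ≤ t} ∩ ((fun t : ℝ => y - t • v) ⁻¹' K ∩
      (fun t : ℝ => y - (t - 1) • v) ⁻¹' K) with hS
  have h0S : (0 : ℝ) ∈ S := by
    refine ⟨Set.mem_setOf.mpr le_rfl, Set.mem_preimage.mpr (by simpa using hy),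
      Set.mem_preimage.mpr ?_⟩
    have h : y - ((0 : ℝ) - 1) • v = x := by rw [hv]; module
    rw [h]; exact hx
  have hSclosed : IsClosed S :=
    (isClosed_le continuous_const continuous_id).inter
      ((hKclosed.preimage hf).inter (hKclosed.preimage hf'))
  obtain ⟨R, hR⟩ := hK_compact.isBounded.exists_norm_le
  have hv0 : 0 < ‖v‖ := norm_pos_iff.mpr hne
  have hSb : S ⊆ Set.Icc 0 ((R + ‖y‖) / ‖v‖) := by
    rintro t ⟨ht0, htK, -⟩
    refine ⟨ht0, ?_⟩
    have h1 : ‖y - t • v‖ ≤ R := hR _ htK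
    have h2 : ‖t • v‖ - ‖y‖ ≤ ‖t • v - y‖ := norm_sub_norm_le _ _
    have h3 : ‖t • v - y‖ = ‖y - t • v‖ := norm_sub_rev _ _
    rw [h3, norm_smul, Real.norm_eq_abs, abs_of_nonneg ht0] at h2
    rw [le_div_iff₀ hv0]
    nlinarith
  have hScompact : IsCompact S := isCompact_Icc.of_isClosed_subset hSclosed hSb
  set t₀ := sSup S with ht₀def
  have ht₀ : t₀ ∈ S := hScompact.sSup_mem ⟨0, h0S⟩
  set p := y - t₀ • v with hp
  have hpK : p ∈ K := ht₀.2.1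
  have hpint : p ∉ interior K := by
    intro hpint
    have hev : ∀ᶠ t in nhds t₀, y - t • v ∈ interior K :=
      hf.continuousAt.eventually_mem (isOpen_interior.mem_nhds hpint)
    rw [Metric.eventually_nhds_iff] at hev
    obtain ⟨δ, hδ, hδ'⟩ := hev
    set η := min δ 1 / 2 with hη
    have hη0 : 0 < η := by positivity
    have hηδ : η < δ := by
      have : min δ 1 ≤ δ := min_le_left _ _
      linarith
    have hη1 : η ≤ 1 / 2 := by
      have : min δ 1 ≤ 1 := min_le_right _ _
      linarith
    set t₁ := t₀ + η with ht₁
    have ht₁S : t₁ ∈ S := by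
      have ht₀0 : (0 : ℝ) ≤ t₀ := ht₀.1
      refine ⟨Set.mem_setOf.mpr (by linarith), Set.mem_preimage.mpr ?_, Set.mem_preimage.mpr ?_⟩
      · have : dist t₁ t₀ < δ := by
          simp only [ht₁, Real.dist_eq, add_sub_cancel_left, abs_of_pos hη0]
          exact hηδ
        exact interior_subset (hδ' this)
      · -- y - (t₁ - 1) • v = (1 - η) • (y - (t₀ - 1) • v) + η • (y - t₀ • v)
        have hcombo : y - (t₁ - 1) • v
            = η • (y - t₀ • v) + (1 - η) • (y - (t₀ - 1) • v) := by
          rw [ht₁]; module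
        have := hK_convex.combo_interior_closure_mem_interior hpint
          (subset_closure ht₀.2.2) hη0 (by linarith : (0:ℝ) ≤ 1 - η)
          (by ring)
        show y - (t₁ - 1) • v ∈ K
        rw [hcombo]
        exact interior_subset this
    have : t₁ ≤ t₀ := le_csSup ⟨(R + ‖y‖) / ‖v‖, fun s hs => (hSb hs).2⟩ ht₁S
    linarith
  refine ⟨p, ?_, ?_⟩
  · rw [frontier, hKclosed.closure_eq]
    exact ⟨hpK, hpint⟩
  · have h : p + v = y - (t₀ - 1) • v := by rw [hp]; module
    rw [h]
    exact ht₀.2.2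

/-- For a convex body `K ⊂ ℝⁿ` with `0 ∈ int K`, the set
`K₀ = ⋃_{p ∈ ∂K} (-p + K)` is convex. -/
theorem pansu_wulff_stmt6 {n : ℕ}
    (K : Set (EuclideanSpace ℝ (Fin n)))
    (hK_compact : IsCompact K) (hK_convex : Convex ℝ K)
    (hK_zero : (0 : EuclideanSpace ℝ (Fin n)) ∈ interior K) :
    Convex ℝ (⋃ p ∈ frontier K, (-p +ᵥ K)) := by
  rcases Set.eq_empty_or_nonempty (frontier K) with hfr | ⟨p₀, hp₀⟩
  · simp only [hfr, Set.mem_empty_iff_false, Set.iUnion_of_empty, Set.iUnion_empty]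
    exact convex_empty
  · have hKclosed := hK_compact.isClosed
    have hfrK : frontier K ⊆ K := hKclosed.frontier_subset
    have key : (⋃ p ∈ frontier K, (-p +ᵥ K)) = K - K := by
      apply Set.Subset.antisymm
      · intro w hw
        simp only [Set.mem_iUnion] at hw
        obtain ⟨p, hpfr, hw⟩ := hw
        rw [Set.mem_vadd_set_iff_neg_vadd_mem] at hw
        rw [Set.mem_sub]
        exact ⟨w + p, by simpa [add_comm] using hw, p, hfrK hpfr, by abel⟩
      · rintro w ⟨a, ha, b, hb, rfl⟩
        by_cases hab : a - b = 0
        · simp only [Set.mem_iUnion]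
          refine ⟨p₀, hp₀, ?_⟩
          rw [Set.mem_vadd_set_iff_neg_vadd_mem, hab]
          simpa using hfrK hp₀
        · obtain ⟨p, hpfr, hpK⟩ := pansu_wulff_stmt6_aux hK_compact hK_convex ha hb hab
          simp only [Set.mem_iUnion]
          refine ⟨p, hpfr, ?_⟩
          rw [Set.mem_vadd_set_iff_neg_vadd_mem]
          simpa [add_comm] using hpK
    rw [key]
    exact hK_convex.sub hK_convex
end

section
/- Let K ⊂ ℝ² be a strictly convex body, x a nonzero vector in the interior of the difference body K - K, and consider segments [p, p+x] contained in K with both endpoints p, p+x on ∂K. Then there exist exactly two such points p. -/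
open Pointwise


local notation "E2" => EuclideanSpace ℝ (Fin 2)

lemma pw12_phi_lin (x : E2) (a b : E2) (s t : ℝ) :
    x 1 * (s • a + t • b) 0 - x 0 * (s • a + t • b) 1
      = s * (x 1 * a 0 - x 0 * a 1) + t * (x 1 * b 0 - x 0 * b 1) := by
  simp [PiLp.add_apply, PiLp.smul_apply, smul_eq_mul]
  ring

lemma pw12_phi_cont (x : E2) :
    Continuous fun v : E2 => x 1 * v 0 - x 0 * v 1 := by
  fun_prop

lemma pw12_exists_r (x : E2) (d : E2) (h : x 1 * d 0 - x 0 * d 1 = 0) (hx : x ≠ 0) :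
    ∃ r : ℝ, d = r • x := by
  have hx' : x 0 ≠ 0 ∨ x 1 ≠ 0 := by
    by_contra hc
    push_neg at hc
    apply hx
    ext i
    fin_cases i
    · exact hc.1
    · exact hc.2
  rcases hx' with h0 | h1
  · refine ⟨d 0 / x 0, ?_⟩
    ext i
    fin_cases i
    · simp [PiLp.smul_apply, smul_eq_mul]
      field_simp
    · simp [PiLp.smul_apply, smul_eq_mul]
      field_simp
      linear_combination -h
  · refine ⟨d 1 / x 1, ?_⟩
    ext i
    fin_cases i
    · simp [PiLp.smul_apply, smul_eq_mul]
      field_simp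
      linear_combination h
    · simp [PiLp.smul_apply, smul_eq_mul]
      field_simp

lemma pw12_aux_max (K : Set E2) (hK_compact : IsCompact K) (hK_convex : Convex ℝ K)
    (x : E2) (φ : E2 → ℝ) (hφc : Continuous φ)
    (hlin : ∀ (a b : E2) (s t : ℝ), φ (s • a + t • b) = s * φ a + t * φ b)
    (hφx : φ x = 0) (v : E2) (hv : 0 < φ v)
    (p₁ : E2) (hp₁K : p₁ ∈ K) (hp₁xK : p₁ + x ∈ K)
    (hmax : ∀ q : E2, q ∈ K → q + x ∈ K → φ q ≤ φ p₁) :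
    p₁ ∈ frontier K ∧ p₁ + x ∈ frontier K := by
  have hKcl : IsClosed K := hK_compact.isClosed
  obtain ⟨s, hsK, hsmax⟩ := hK_compact.exists_isMaxOn ⟨p₁, hp₁K⟩ hφc.continuousOn
  rw [isMaxOn_iff] at hsmax
  -- helper: a point in the interior forces φ p₁ < φ s
  have key : ∀ w : E2, w ∈ interior K → φ w = φ p₁ → φ p₁ < φ s := by
    intro w hw hwφ
    have htend : Filter.Tendsto (fun t : ℝ => w + t • v) (nhds 0) (nhds w) := by
      have : Continuous fun t : ℝ => w + t • v := by fun_prop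
      have h0 : w + (0:ℝ) • v = w := by simp
      simpa [h0] using this.tendsto 0
    have hev : ∀ᶠ t : ℝ in nhds 0, w + t • v ∈ interior K :=
      htend.eventually (isOpen_interior.eventually_mem hw)
    have hev' : ∀ᶠ t : ℝ in nhdsWithin 0 (Set.Ioi 0), w + t • v ∈ interior K :=
      hev.filter_mono nhdsWithin_le_nhds
    obtain ⟨t, htmem, htpos⟩ := (hev'.and self_mem_nhdsWithin).exists
    have h1 : φ (w + t • v) = φ w + t * φ v := by
      have := hlin w v 1 t
      simpa using this
    have := hsmax _ (interior_subset htmem)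
    rw [h1, hwφ] at this
    nlinarith [htpos]
  constructor
  · -- p₁ ∈ frontier K
    rw [hKcl.frontier_eq]
    refine ⟨hp₁K, fun hint => ?_⟩
    have hlt : φ p₁ < φ s := key p₁ hint rfl
    -- q t = p₁ + t • (s - p₁ - x)
    have htend : Filter.Tendsto (fun t : ℝ => p₁ + t • (s - p₁ - x)) (nhds 0) (nhds p₁) := by
      have : Continuous fun t : ℝ => p₁ + t • (s - p₁ - x) := by fun_prop
      simpa using this.tendsto 0
    have hev : ∀ᶠ t : ℝ in nhds 0, p₁ + t • (s - p₁ - x) ∈ interior K :=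
      htend.eventually (isOpen_interior.eventually_mem hint)
    have hev1 : ∀ᶠ t : ℝ in nhds 0, t < 1 := by
      exact Filter.Tendsto.eventually_lt_const one_pos Filter.tendsto_id
    have hev2 : ∀ᶠ t : ℝ in nhdsWithin (0:ℝ) (Set.Ioi 0), _ :=
      (hev.and hev1).filter_mono nhdsWithin_le_nhds
    obtain ⟨t, ⟨htK, ht1⟩, htpos⟩ := (hev2.and self_mem_nhdsWithin).exists
    have htpos' : (0:ℝ) < t := htpos
    set q := p₁ + t • (s - p₁ - x) with hq
    have hqx : q + x = (1 - t) • (p₁ + x) + t • s := by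
      rw [hq]; module
    have hqxK : q + x ∈ K := by
      rw [hqx]
      exact hK_convex hp₁xK hsK (by linarith) htpos'.le (by ring)
    have hφq : φ q = (1 - t) * φ p₁ + t * φ s := by
      have hrw : q = (1 - t) • p₁ + t • (s - x) := by rw [hq]; module
      have h2 : φ (s - x) = φ s - φ x := by
        have := hlin s x 1 (-1)
        simpa [sub_eq_add_neg] using this
      rw [hrw, hlin, h2, hφx]; ring
    have := hmax q (interior_subset htK) hqxK
    rw [hφq] at this
    nlinarith
  · -- p₁ + x ∈ frontier K
    rw [hKcl.frontier_eq]
    refine ⟨hp₁xK, fun hint => ?_⟩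
    have hφp₁x : φ (p₁ + x) = φ p₁ := by
      have := hlin p₁ x 1 1
      simpa [hφx] using this
    have hlt : φ p₁ < φ s := key (p₁ + x) hint hφp₁x
    have htend : Filter.Tendsto (fun t : ℝ => (p₁ + x) + t • (s - p₁)) (nhds 0) (nhds (p₁ + x)) := by
      have : Continuous fun t : ℝ => (p₁ + x) + t • (s - p₁) := by fun_prop
      simpa using this.tendsto 0
    have hev : ∀ᶠ t : ℝ in nhds 0, (p₁ + x) + t • (s - p₁) ∈ interior K :=
      htend.eventually (isOpen_interior.eventually_mem hint)
    have hev1 : ∀ᶠ t : ℝ in nhds 0, t < 1 := by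
      exact Filter.Tendsto.eventually_lt_const one_pos Filter.tendsto_id
    have hev2 : ∀ᶠ t : ℝ in nhdsWithin (0:ℝ) (Set.Ioi 0), _ :=
      (hev.and hev1).filter_mono nhdsWithin_le_nhds
    obtain ⟨t, ⟨htK, ht1⟩, htpos⟩ := (hev2.and self_mem_nhdsWithin).exists
    have htpos' : (0:ℝ) < t := htpos
    set w := (1 - t) • p₁ + t • s with hw
    have hwK : w ∈ K := hK_convex hp₁K hsK (by linarith) htpos'.le (by ring)
    have hwx : w + x = (p₁ + x) + t • (s - p₁) := by rw [hw]; module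
    have hwxK : w + x ∈ K := by rw [hwx]; exact interior_subset htK
    have hφw : φ w = (1 - t) * φ p₁ + t * φ s := by rw [hw, hlin]
    have := hmax w hwK hwxK
    rw [hφw] at this
    nlinarith

lemma pw12_aux_unique (K : Set E2) (hKcl : IsClosed K) (hK_convex : Convex ℝ K)
    (x p c : E2) (r : ℝ)
    (hp : p ∈ frontier K) (hpx : p + x ∈ frontier K)
    (hpK : p ∈ K) (hpxK : p + x ∈ K)
    (hc : c ∈ interior K) (hcx : c + x ∈ interior K)
    (hcp : c = p + r • x) : False := by
  have hpni : p ∉ interior K := ((hKcl.frontier_eq ▸ hp) : p ∈ K \ interior K).2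
  have hpxni : p + x ∉ interior K := ((hKcl.frontier_eq ▸ hpx) : p + x ∈ K \ interior K).2
  rcases lt_trichotomy r 0 with hr | hr | hr
  · -- p = (1 - 1/(1-r)) • (p+x) + (1/(1-r)) • c ∈ interior K
    have h1r : (0:ℝ) < 1 - r := by linarith
    have hkey : (1 - 1/(1-r)) • (p + x) + (1/(1-r)) • c = p := by
      rw [hcp]
      match_scalars
      · field_simp <;> try ring
      · field_simp <;> try ring
    have : p ∈ interior K := by
      rw [← hkey]
      refine hK_convex.combo_self_interior_mem_interior hpxK hc ?_ ?_ (by ring)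
      · rw [sub_nonneg]
        rw [div_le_one h1r]
        linarith
      · positivity
    exact hpni this
  · exact hpni (by rw [hcp, hr] at hc; simpa using hc)
  · -- p + x = (r/(1+r)) • p + (1/(1+r)) • (c+x) ∈ interior K
    have h1r : (0:ℝ) < 1 + r := by linarith
    have hkey : (r/(1+r)) • p + (1/(1+r)) • (c + x) = p + x := by
      rw [hcp]
      match_scalars
      · field_simp <;> try ring
      · field_simp <;> try ring
    have : p + x ∈ interior K := by
      rw [← hkey]
      refine hK_convex.combo_self_interior_mem_interior hpK hcx ?_ ?_ ?_
      · positivity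
      · positivity
      · field_simp <;> try ring
    exact hpxni this

lemma pw12_combo_int (K : Set E2)
    (hK_strict : ∀ x ∈ K, ∀ y ∈ K, x ≠ y →
      ∀ lam ∈ Set.Ioo (0:ℝ) 1, lam • x + (1 - lam) • y ∈ interior K)
    (x : E2) (α β : E2) (hαK : α ∈ K) (hαxK : α + x ∈ K) (hβK : β ∈ K) (hβxK : β + x ∈ K)
    (hαβ : α ≠ β) (μ : ℝ) (hμ : μ ∈ Set.Ioo (0:ℝ) 1) :
    (μ • α + (1 - μ) • β) ∈ interior K ∧ (μ • α + (1 - μ) • β) + x ∈ interior K := by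
  constructor
  · exact hK_strict α hαK β hβK hαβ μ hμ
  · have h : (μ • α + (1 - μ) • β) + x = μ • (α + x) + (1 - μ) • (β + x) := by module
    rw [h]
    refine hK_strict (α + x) hαxK (β + x) hβxK ?_ μ hμ
    intro hcon
    exact hαβ (by simpa using hcon)

section
variable (K : Set E2)
  (hK_compact : IsCompact K) (hK_convex : Convex ℝ K)
  (hK_strict : ∀ x ∈ K, ∀ y ∈ K, x ≠ y →
      ∀ lam ∈ Set.Ioo (0:ℝ) 1, lam • x + (1 - lam) • y ∈ interior K)
  (x : E2) (hx : x ≠ 0) (hx_int : x ∈ interior (K - K))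

include hK_strict hx hx_int in
lemma pw12_z : ∃ z : E2, z ∈ interior K ∧ z + x ∈ interior K := by
  have hxn : (0:ℝ) < ‖x‖ := norm_pos_iff.mpr hx
  obtain ⟨δ, hδ, hball⟩ := Metric.isOpen_iff.mp isOpen_interior x hx_int
  set t := δ / (2 * ‖x‖) with ht
  have htpos : 0 < t := by positivity
  have hmem : (1 + t) • x ∈ K - K := by
    have h1 : x + t • x ∈ Metric.ball x δ := by
      rw [Metric.mem_ball, dist_eq_norm, add_sub_cancel_left, norm_smul,
        Real.norm_eq_abs, abs_of_pos htpos]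
      have : t * ‖x‖ = δ / 2 := by
        rw [ht]; field_simp
      rw [this]; linarith
    have h2 : (1 + t) • x = x + t • x := by module
    rw [h2]
    exact interior_subset (hball h1)
  rw [Set.mem_sub] at hmem
  obtain ⟨a, ha, b, hb, hab⟩ := hmem
  have haeq : a = b + (1 + t) • x := by rw [← hab]; abel
  have hne : a ≠ b := by
    intro h
    rw [h, sub_self] at hab
    exact smul_ne_zero (by positivity) hx hab.symm
  have h1t : (0:ℝ) < 1 + t := by linarith
  refine ⟨b + (t/2) • x, ?_, ?_⟩
  · have hlam : (t/2)/(1+t) ∈ Set.Ioo (0:ℝ) 1 := by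
      constructor
      · positivity
      · rw [div_lt_one h1t]; linarith
    have := hK_strict a ha b hb hne _ hlam
    have hid : ((t/2)/(1+t)) • a + (1 - (t/2)/(1+t)) • b = b + (t/2) • x := by
      rw [haeq]
      match_scalars
      · ring
      · field_simp
    rwa [hid] at this
  · have hlam : (1 + t/2)/(1+t) ∈ Set.Ioo (0:ℝ) 1 := by
      constructor
      · positivity
      · rw [div_lt_one h1t]; linarith
    have := hK_strict a ha b hb hne _ hlam
    have hid : ((1 + t/2)/(1+t)) • a + (1 - (1 + t/2)/(1+t)) • b = b + (t/2) • x + x := by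
      rw [haeq]
      match_scalars
      · ring
      · field_simp
        ring
    rwa [hid] at this
end

lemma pw12_interp (A B C : ℝ) (h : C - B ≠ 0) :
    (A - B)/(C - B) * C + (1 - (A - B)/(C - B)) * B = A := by
  field_simp
  ring




/-- If `K ⊂ ℝ²` is a strictly convex body and `x ≠ 0` lies in the interior
of the difference body `K - K`, then there are exactly two points `p ∈ ∂K` such that the
segment `[p, p+x]` is contained in `K` with both endpoints on `∂K`. -/
theorem pansu_wulff_stmt12
    (K : Set (EuclideanSpace ℝ (Fin 2)))
    (hK_compact : IsCompact K) (hK_convex : Convex ℝ K)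
    (hK_int : (interior K).Nonempty)
    (hK_strict : ∀ x ∈ K, ∀ y ∈ K, x ≠ y →
      ∀ lam ∈ Set.Ioo (0:ℝ) 1, lam • x + (1 - lam) • y ∈ interior K)
    (x : EuclideanSpace ℝ (Fin 2)) (hx : x ≠ 0) (hx_int : x ∈ interior (K - K)) :
    ∃ p₁ p₂ : EuclideanSpace ℝ (Fin 2), p₁ ≠ p₂ ∧
      (p₁ ∈ frontier K ∧ p₁ + x ∈ frontier K ∧ segment ℝ p₁ (p₁ + x) ⊆ K) ∧
      (p₂ ∈ frontier K ∧ p₂ + x ∈ frontier K ∧ segment ℝ p₂ (p₂ + x) ⊆ K) ∧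
      ∀ p : EuclideanSpace ℝ (Fin 2),
        (p ∈ frontier K ∧ p + x ∈ frontier K ∧ segment ℝ p (p + x) ⊆ K) →
        p = p₁ ∨ p = p₂ := by
  have hKcl : IsClosed K := hK_compact.isClosed
  set φ : E2 → ℝ := fun v => x 1 * v 0 - x 0 * v 1 with hφdef
  have hlin : ∀ (a b : E2) (s t : ℝ), φ (s • a + t • b) = s * φ a + t * φ b :=
    pw12_phi_lin x
  have hφx : φ x = 0 := by rw [hφdef]; ring
  have hφc : Continuous φ := pw12_phi_cont x
  have hφneg : ∀ w : E2, φ (-w) = - φ w := by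
    intro w
    have h := hlin w w (-1) 0
    have h2 : (-1 : ℝ) • w + (0:ℝ) • w = -w := by module
    rw [h2] at h
    rw [h]; ring
  -- a vector with positive φ value
  obtain ⟨v, hv⟩ : ∃ v : E2, 0 < φ v := by
    have hx' : x 0 ≠ 0 ∨ x 1 ≠ 0 := by
      by_contra hc
      push_neg at hc
      apply hx
      ext i
      fin_cases i
      · exact hc.1
      · exact hc.2
    rcases hx' with h0 | h1
    · refine ⟨EuclideanSpace.single 1 (-(x 0)), ?_⟩
      have : φ (EuclideanSpace.single 1 (-(x 0))) = x 0 * x 0 := by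
        rw [hφdef]
        simp [EuclideanSpace.single_apply]
      rw [this]
      exact mul_self_pos.mpr h0
    · refine ⟨EuclideanSpace.single 0 (x 1), ?_⟩
      have : φ (EuclideanSpace.single 0 (x 1)) = x 1 * x 1 := by
        rw [hφdef]
        simp [EuclideanSpace.single_apply]
      rw [this]
      exact mul_self_pos.mpr h1
  obtain ⟨z, hzK, hzxK⟩ := pw12_z K hK_strict x hx hx_int
  -- the set L of admissible base points
  set L : Set E2 := {p : E2 | p ∈ K ∧ p + x ∈ K} with hLdef
  have hLcl : IsClosed L := by
    have : L = K ∩ (fun p : E2 => p + x) ⁻¹' K := rfl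
    rw [this]
    exact hKcl.inter (hKcl.preimage (by fun_prop))
  have hLsub : L ⊆ K := fun q hq => hq.1
  have hLc : IsCompact L := hK_compact.of_isClosed_subset hLcl hLsub
  have hLne : L.Nonempty := ⟨z, interior_subset hzK, interior_subset hzxK⟩
  obtain ⟨p₁, hp₁L, hp₁max⟩ := hLc.exists_isMaxOn hLne hφc.continuousOn
  obtain ⟨p₂, hp₂L, hp₂max⟩ := hLc.exists_isMaxOn hLne hφc.neg.continuousOn
  rw [isMaxOn_iff] at hp₁max hp₂max
  have hp₂min : ∀ q ∈ L, φ p₂ ≤ φ q := by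
    intro q hq
    have := hp₂max q hq
    simpa using this
  -- frontier properties
  have hfr₁ : p₁ ∈ frontier K ∧ p₁ + x ∈ frontier K := by
    refine pw12_aux_max K hK_compact hK_convex x φ hφc hlin hφx v hv p₁ hp₁L.1 hp₁L.2 ?_
    intro q h1 h2
    exact hp₁max q ⟨h1, h2⟩
  have hfr₂ : p₂ ∈ frontier K ∧ p₂ + x ∈ frontier K := by
    refine pw12_aux_max K hK_compact hK_convex x (fun w => -(φ w)) hφc.neg ?_ ?_ (-v) ?_
      p₂ hp₂L.1 hp₂L.2 ?_
    · intro a b s t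
      show -(φ _) = s * -(φ a) + t * -(φ b)
      rw [hlin]; ring
    · show -(φ x) = 0
      rw [hφx]; ring
    · show (0:ℝ) < -(φ (-v))
      rw [hφneg]; simpa using hv
    · intro q h1 h2
      exact hp₂max q ⟨h1, h2⟩
  -- p₁ ≠ p₂ via a strict gap in φ values
  have hgap : φ p₂ < φ p₁ := by
    have htend : Filter.Tendsto (fun t : ℝ => z + t • v) (nhds 0) (nhds z) := by
      have : Continuous fun t : ℝ => z + t • v := by fun_prop
      simpa using this.tendsto 0
    have htend2 : Filter.Tendsto (fun t : ℝ => (z + x) + t • v) (nhds 0) (nhds (z + x)) := by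
      have : Continuous fun t : ℝ => (z + x) + t • v := by fun_prop
      simpa using this.tendsto 0
    have hev : ∀ᶠ t : ℝ in nhds 0, z + t • v ∈ interior K ∧ (z + x) + t • v ∈ interior K :=
      (htend.eventually (isOpen_interior.eventually_mem hzK)).and
        (htend2.eventually (isOpen_interior.eventually_mem hzxK))
    have hev2 : ∀ᶠ t : ℝ in nhdsWithin (0:ℝ) (Set.Ioi 0), _ :=
      hev.filter_mono nhdsWithin_le_nhds
    obtain ⟨t, ⟨ht1, ht2⟩, htpos⟩ := (hev2.and self_mem_nhdsWithin).exists
    have htpos' : (0:ℝ) < t := htpos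
    have hmemL : z + t • v ∈ L := by
      refine ⟨interior_subset ht1, interior_subset ?_⟩
      have : z + t • v + x = (z + x) + t • v := by abel
      rw [this]; exact ht2
    have h1 : φ (z + t • v) = φ z + t * φ v := by
      have := hlin z v 1 t
      simpa using this
    have h2 := hp₁max _ hmemL
    have h3 := hp₂min z ⟨interior_subset hzK, interior_subset hzxK⟩
    rw [h1] at h2
    nlinarith
  have hne : p₁ ≠ p₂ := fun h => by rw [h] at hgap; exact lt_irrefl _ hgap
  refine ⟨p₁, p₂, hne, ⟨hfr₁.1, hfr₁.2, hK_convex.segment_subset hp₁L.1 hp₁L.2⟩,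
    ⟨hfr₂.1, hfr₂.2, hK_convex.segment_subset hp₂L.1 hp₂L.2⟩, ?_⟩
  -- uniqueness
  rintro p ⟨hpf, hpxf, -⟩
  have hpK : p ∈ K := ((hKcl.frontier_eq ▸ hpf) : p ∈ K \ interior K).1
  have hpxK : p + x ∈ K := ((hKcl.frontier_eq ▸ hpxf) : p + x ∈ K \ interior K).1
  have hpL : p ∈ L := ⟨hpK, hpxK⟩
  by_contra hcon
  push_neg at hcon
  obtain ⟨hne₁, hne₂⟩ := hcon
  have h1 : φ p ≤ φ p₁ := hp₁max p hpL
  have h2 : φ p₂ ≤ φ p := hp₂min p hpL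
  -- produce a combination with the same φ value
  obtain ⟨α, β, hαL, hβL, hαβ, μ, hμ, hφeq⟩ :
      ∃ α β : E2, α ∈ L ∧ β ∈ L ∧ α ≠ β ∧
        ∃ μ ∈ Set.Ioo (0:ℝ) 1, μ * φ α + (1 - μ) * φ β = φ p := by
    rcases eq_or_lt_of_le h1 with hM | hM
    · exact ⟨p, p₁, hpL, hp₁L, hne₁, 1/2, by norm_num, by rw [hM]; ring⟩
    rcases eq_or_lt_of_le h2 with hm | hm
    · exact ⟨p, p₂, hpL, hp₂L, hne₂, 1/2, by norm_num, by rw [← hm]; ring⟩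
    · refine ⟨p₁, p₂, hp₁L, hp₂L, hne, (φ p - φ p₂)/(φ p₁ - φ p₂), ⟨?_, ?_⟩, ?_⟩
      · apply div_pos <;> linarith
      · rw [div_lt_one (by linarith)]; linarith
      · exact pw12_interp (φ p) (φ p₂) (φ p₁) (by linarith)
  set c : E2 := μ • α + (1 - μ) • β with hcdef
  obtain ⟨hcK, hcxK⟩ := pw12_combo_int K hK_strict x α β hαL.1 hαL.2 hβL.1 hβL.2 hαβ μ hμ
  have hφceq : φ c = φ p := by rw [hcdef, hlin]; exact hφeq
  obtain ⟨r, hr⟩ : ∃ r : ℝ, c - p = r • x := by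
    refine pw12_exists_r x (c - p) ?_ hx
    have hsub : ∀ i, (c - p) i = c i - p i := fun i => rfl
    rw [hsub 0, hsub 1]
    have hφc' : x 1 * c 0 - x 0 * c 1 = x 1 * p 0 - x 0 * p 1 := hφceq
    linear_combination hφc'
  have hcp : c = p + r • x := by rw [← hr]; abel
  exact absurd hcp (by
    intro h
    exact pw12_aux_unique K hKcl hK_convex x p c r hpf hpxf hpK hpxK hcK hcxK h)
end

section
/- Let K ⊂ ℝ² be a strictly convex body and x ≠ 0. Then x lies on the boundary of the difference body K - K if and only if the length |x| is the maximal length of a segment contained in K with direction x/|x|, and in that case there is exactly one point p ∈ ∂K with [p, p+x] ⊂ K and p + x ∈ ∂K. -/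
open Pointwise

/-- For a strictly convex body `K ⊂ ℝ²` and `x ≠ 0`: `x` lies on the
boundary of the difference body `K - K` iff `‖x‖` is the maximal length of a segment
contained in `K` with direction `x/‖x‖`; and in that case there is exactly one `p ∈ ∂K`
with `[p, p+x] ⊆ K` and `p + x ∈ ∂K`. -/
theorem pansu_wulff_stmt13
    (K : Set (EuclideanSpace ℝ (Fin 2)))
    (hK_compact : IsCompact K) (hK_convex : Convex ℝ K)
    (hK_int : (interior K).Nonempty)
    (hK_strict : ∀ x ∈ K, ∀ y ∈ K, x ≠ y →
      ∀ lam ∈ Set.Ioo (0:ℝ) 1, lam • x + (1 - lam) • y ∈ interior K)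
    (x : EuclideanSpace ℝ (Fin 2)) (hx : x ≠ 0) :
    (x ∈ frontier (K - K) ↔
      IsGreatest {L : ℝ | 0 ≤ L ∧ ∃ z : EuclideanSpace ℝ (Fin 2),
        segment ℝ z (z + (L / ‖x‖) • x) ⊆ K} ‖x‖) ∧
    (x ∈ frontier (K - K) →
      ∃! p : EuclideanSpace ℝ (Fin 2),
        p ∈ frontier K ∧ p + x ∈ frontier K ∧ segment ℝ p (p + x) ⊆ K) := by
  have hxn : (0:ℝ) < ‖x‖ := norm_pos_iff.2 hx
  have hx0 : ‖x‖ ≠ 0 := ne_of_gt hxn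
  have hKclosed : IsClosed K := hK_compact.isClosed
  have hD : Convex ℝ (K - K) := hK_convex.sub hK_convex
  have hDcompact : IsCompact (K - K) := by
    have h1 : K - K = (fun p : EuclideanSpace ℝ (Fin 2) × EuclideanSpace ℝ (Fin 2) =>
        p.1 - p.2) '' (K ×ˢ K) := by
      rw [Set.image_prod]
      exact Set.image2_sub.symm
    rw [h1]
    exact (hK_compact.prod hK_compact).image (continuous_fst.sub continuous_snd)
  have hDclosed : IsClosed (K - K) := hDcompact.isClosed
  -- if m ∈ K and m + y ∈ interior K then y ∈ interior (K - K)
  have hmemint : ∀ m ∈ K, ∀ y : EuclideanSpace ℝ (Fin 2),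
      m + y ∈ interior K → y ∈ interior (K - K) := by
    intro m hm y hy
    have hU : IsOpen {p : EuclideanSpace ℝ (Fin 2) | m + p ∈ interior K} :=
      isOpen_interior.preimage (continuous_const.add continuous_id)
    have hsub : {p : EuclideanSpace ℝ (Fin 2) | m + p ∈ interior K} ⊆ K - K := by
      intro p hp
      have : (m + p) - m ∈ K - K := Set.sub_mem_sub (interior_subset hp) hm
      simpa using this
    exact interior_maximal hsub hU hy
  have h0int : (0 : EuclideanSpace ℝ (Fin 2)) ∈ interior (K - K) := by
    obtain ⟨c, hc⟩ := hK_int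
    exact hmemint c (interior_subset hc) 0 (by simpa using hc)
  -- scaling lemma
  have hscale : ∀ t : ℝ, 1 < t → t • x ∈ K - K → x ∈ interior (K - K) := by
    intro t ht htx
    have ht0 : (0:ℝ) < t := lt_trans one_pos ht
    have h1t : 1 / t < 1 := by rw [div_lt_one ht0]; exact ht
    have h := hD.combo_interior_self_mem_interior h0int htx
      (a := 1 - 1/t) (b := 1/t) (by linarith) (by positivity) (by ring)
    have he : (1 - 1/t) • (0 : EuclideanSpace ℝ (Fin 2)) + (1/t) • (t • x) = x := by
      rw [smul_zero, smul_smul, one_div, inv_mul_cancel₀ (ne_of_gt ht0), one_smul, zero_add]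
    rwa [he] at h
  -- norm computation for the perturbation
  have hnorm : ∀ r : ℝ, 0 < r → ‖(r / (2 * ‖x‖)) • x‖ = r / 2 := by
    intro r hr
    rw [norm_smul, Real.norm_eq_abs, abs_of_pos (by positivity)]
    field_simp
  -- interior point gives a longer multiple
  have hgrow : x ∈ interior (K - K) → ∃ t : ℝ, 1 < t ∧ t • x ∈ K - K := by
    intro hxi
    obtain ⟨r, hr, hball⟩ := Metric.isOpen_iff.1 isOpen_interior x hxi
    have hεpos : 0 < r / (2 * ‖x‖) := by positivity
    refine ⟨1 + r / (2 * ‖x‖), by linarith, ?_⟩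
    have hmem : (1 + r / (2 * ‖x‖)) • x ∈ Metric.ball x r := by
      rw [Metric.mem_ball, dist_eq_norm]
      have he : (1 + r / (2 * ‖x‖)) • x - x = (r / (2 * ‖x‖)) • x := by
        rw [add_smul, one_smul]; abel
      rw [he, hnorm r hr]; linarith
    exact interior_subset (hball hmem)
  -- frontier characterization
  have hfrchar : x ∈ frontier (K - K) ↔ (x ∈ K - K ∧ ∀ t : ℝ, 1 < t → t • x ∉ K - K) := by
    constructor
    · intro hfr
      have hmem : x ∈ K - K := by
        have := hfr.1; rwa [hDclosed.closure_eq] at this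
      exact ⟨hmem, fun t ht htx => hfr.2 (hscale t ht htx)⟩
    · intro ⟨hmem, hmax⟩
      refine ⟨subset_closure hmem, fun hxi => ?_⟩
      obtain ⟨t, ht, htx⟩ := hgrow hxi
      exact hmax t ht htx
  constructor
  · -- claim 1
    constructor
    · intro hfr
      obtain ⟨hmem, hmax⟩ := hfrchar.1 hfr
      obtain ⟨a, ha, b, hb, hab⟩ := Set.mem_sub.1 hmem
      constructor
      · refine ⟨norm_nonneg x, b, ?_⟩
        rw [div_self hx0, one_smul]
        have hbx : b + x = a := by rw [← hab]; abel
        rw [hbx]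
        exact hK_convex.segment_subset hb ha
      · rintro L ⟨hL0, z, hz⟩
        by_contra h
        push_neg at h
        have ht : 1 < L / ‖x‖ := by rw [lt_div_iff₀ hxn]; linarith
        have hz1 : z ∈ K := hz (left_mem_segment ℝ _ _)
        have hz2 : z + (L / ‖x‖) • x ∈ K := hz (right_mem_segment ℝ _ _)
        have : (L / ‖x‖) • x ∈ K - K := by
          have := Set.sub_mem_sub hz2 hz1
          simpa using this
        exact hmax _ ht this
    · rintro ⟨⟨_, z, hz⟩, hub⟩
      rw [div_self hx0, one_smul] at hz
      have hz1 : z ∈ K := hz (left_mem_segment ℝ _ _)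
      have hz2 : z + x ∈ K := hz (right_mem_segment ℝ _ _)
      have hmem : x ∈ K - K := by
        have := Set.sub_mem_sub hz2 hz1; simpa using this
      refine hfrchar.2 ⟨hmem, ?_⟩
      intro t ht htx
      obtain ⟨a, ha, b, hb, hab⟩ := Set.mem_sub.1 htx
      have hL : t * ‖x‖ ∈ {L : ℝ | 0 ≤ L ∧ ∃ z : EuclideanSpace ℝ (Fin 2),
          segment ℝ z (z + (L / ‖x‖) • x) ⊆ K} := by
        refine ⟨by positivity, b, ?_⟩
        have he : t * ‖x‖ / ‖x‖ = t := by field_simp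
        rw [he]
        have hbx : b + t • x = a := by rw [← hab]; abel
        rw [hbx]
        exact hK_convex.segment_subset hb ha
      have := hub hL
      nlinarith
  · -- claim 2
    intro hfr
    obtain ⟨hmem, hmax⟩ := hfrchar.1 hfr
    have hnotint : x ∉ interior (K - K) := hfr.2
    obtain ⟨a, ha, b, hb, hab⟩ := Set.mem_sub.1 hmem
    have hbx : b + x = a := by rw [← hab]; abel
    -- any point of K with p + x ∈ K is automatically on the frontier
    have hfrK : ∀ p ∈ K, p + x ∈ K → p ∈ frontier K ∧ p + x ∈ frontier K := by
      intro p hp hpx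
      constructor
      · refine ⟨subset_closure hp, fun hpi => ?_⟩
        obtain ⟨r, hr, hball⟩ := Metric.isOpen_iff.1 isOpen_interior p hpi
        have hεpos : 0 < r / (2 * ‖x‖) := by positivity
        have hq : p - (r / (2 * ‖x‖)) • x ∈ Metric.ball p r := by
          rw [Metric.mem_ball, dist_eq_norm]
          have he : p - (r / (2 * ‖x‖)) • x - p = -((r / (2 * ‖x‖)) • x) := by abel
          rw [he, norm_neg, hnorm r hr]; linarith
        have hqK : p - (r / (2 * ‖x‖)) • x ∈ K := interior_subset (hball hq)
        have hKK : (1 + r / (2 * ‖x‖)) • x ∈ K - K := by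
          have h := Set.sub_mem_sub hpx hqK
          have he : (p + x) - (p - (r / (2 * ‖x‖)) • x) = (1 + r / (2 * ‖x‖)) • x := by
            rw [add_smul, one_smul]; abel
          rwa [he] at h
        exact hmax _ (by linarith) hKK
      · refine ⟨subset_closure hpx, fun hpi => ?_⟩
        obtain ⟨r, hr, hball⟩ := Metric.isOpen_iff.1 isOpen_interior _ hpi
        have hεpos : 0 < r / (2 * ‖x‖) := by positivity
        have hq : p + x + (r / (2 * ‖x‖)) • x ∈ Metric.ball (p + x) r := by
          rw [Metric.mem_ball, dist_eq_norm]
          have he : p + x + (r / (2 * ‖x‖)) • x - (p + x) = (r / (2 * ‖x‖)) • x := by abel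
          rw [he, hnorm r hr]; linarith
        have hqK : p + x + (r / (2 * ‖x‖)) • x ∈ K := interior_subset (hball hq)
        have hKK : (1 + r / (2 * ‖x‖)) • x ∈ K - K := by
          have h := Set.sub_mem_sub hqK hp
          have he : (p + x + (r / (2 * ‖x‖)) • x) - p = (1 + r / (2 * ‖x‖)) • x := by
            rw [add_smul, one_smul]; abel
          rwa [he] at h
        exact hmax _ (by linarith) hKK
    obtain ⟨hbf, hbxf⟩ := hfrK b hb (hbx ▸ ha)
    refine ⟨b, ⟨hbf, hbxf, ?_⟩, ?_⟩
    · rw [hbx]; exact hK_convex.segment_subset hb ha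
    rintro q ⟨hq1, hq2, -⟩
    by_contra hne
    have hqK : q ∈ K := hKclosed.closure_eq ▸ hq1.1
    have hqxK : q + x ∈ K := hKclosed.closure_eq ▸ hq2.1
    have hne' : q + x ≠ b + x := fun h => hne (by simpa using h)
    have hmid : (1/2 : ℝ) • (q + x) + (1 - 1/2 : ℝ) • (b + x) ∈ interior K :=
      hK_strict (q + x) hqxK (b + x) (hbx ▸ ha) hne' (1/2) ⟨by norm_num, by norm_num⟩
    have hmK : (1/2 : ℝ) • q + (1/2 : ℝ) • b ∈ K :=
      hK_convex hqK hb (by norm_num) (by norm_num) (by norm_num)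
    have hme : ((1/2 : ℝ) • q + (1/2 : ℝ) • b) + x
        = (1/2 : ℝ) • (q + x) + (1 - 1/2 : ℝ) • (b + x) := by
      module
    have : x ∈ interior (K - K) :=
      hmemint _ hmK x (by rw [hme]; exact hmid)
    exact hnotint this
end
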